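/- Let φ be a continuous real-valued function on the unit circle T. For a probability measure μ on T, the supremum over continuous functions g : T → ℝ with g < 1 of the quantity ∫_T g dμ + ∫_T log(1 − g) dλ_T, where λ_T is the uniform (normalized Haar) measure on T, equals the Kullback–Leibler divergence K(λ_T | μ). -/

import Mathlib

open MeasureTheory Real Classical

/-- Kullback–Leibler information `K(P|Q) = ∫ log(dP/dQ) dP` if `P ≪ Q` and the
log-likelihood ratio is `P`-integrable, and `+∞` otherwise. -/
noncomputable def kullback {α : Type*} [MeasurableSpace α] (P Q : Measure α) : EReal :=
  if P ≪ Q ∧ Integrable (llr P Q) P then ((∫ x, llr P Q x ∂P : ℝ) : EReal) else ⊤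

/-- The uniform (normalized arc-length) probability measure on the unit circle of `ℂ`. -/
noncomputable def lambdaT : Measure ℂ :=
  Measure.map (fun θ : ℝ => Complex.exp (θ * Complex.I))
    ((ENNReal.ofReal (2 * π))⁻¹ • volume.restrict (Set.Icc 0 (2 * π)))

open Filter Topology


lemma lambdaT_meas : Measurable (fun θ : ℝ => Complex.exp (θ * Complex.I)) := by
  fun_prop

instance : IsProbabilityMeasure lambdaT := by
  constructor
  rw [lambdaT, Measure.map_apply lambdaT_meas MeasurableSet.univ]
  simp only [Set.preimage_univ, Measure.smul_apply, Measure.restrict_apply MeasurableSet.univ,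
    Set.univ_inter, Real.volume_Icc, smul_eq_mul]
  rw [show (2 * π - 0) = 2 * π by ring]
  exact ENNReal.inv_mul_cancel (by simp [Real.pi_pos]) ENNReal.ofReal_ne_top

lemma lambdaT_sphere : lambdaT {z : ℂ | ‖z‖ ≠ 1} = 0 := by
  rw [lambdaT, Measure.map_apply lambdaT_meas]
  · have : (fun θ : ℝ => Complex.exp (θ * Complex.I)) ⁻¹' {z : ℂ | ‖z‖ ≠ 1} = ∅ := by
      ext θ
      simp [Complex.norm_exp_ofReal_mul_I]
    rw [this]; simp
  · exact (measurableSet_eq_fun (by fun_prop) measurable_const).compl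

lemma integrable_of_bound {α : Type*} [MeasurableSpace α] (μ : Measure α) [IsFiniteMeasure μ]
    (f : α → ℝ) (C : ℝ) (hm : AEStronglyMeasurable f μ) (h : ∀ x, |f x| ≤ C) :
    Integrable f μ :=
  Integrable.mono' (integrable_const C) hm (Filter.Eventually.of_forall fun x => by
    simpa [Real.norm_eq_abs] using h x)

lemma int_abs_diff {α : Type*} [MeasurableSpace α] {μ : Measure α} {f g : α → ℝ}
    (hf : Integrable f μ) (hg : Integrable g μ) :
    |∫ x, f x ∂μ - ∫ x, g x ∂μ| ≤ ∫ x, |f x - g x| ∂μ := by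
  rw [← integral_sub hf hg]
  simpa [Real.norm_eq_abs] using norm_integral_le_integral_norm (fun x => f x - g x) (μ := μ)

lemma clamp_dist {a b x y : ℝ} (hab : a ≤ b) (hy : y ∈ Set.Icc a b) :
    |max a (min b x) - y| ≤ |x - y| := by
  obtain ⟨hya, hyb⟩ := hy
  rcases le_total x a with h | h
  · have h1 : min b x = x := min_eq_right (le_trans h hab)
    have h2 : max a x = a := max_eq_left h
    rw [h1, h2, abs_of_nonpos (by linarith), abs_of_nonpos (by linarith)]
    linarith
  · rcases le_total b x with h' | h'
    · have h1 : min b x = b := min_eq_left h'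
      rw [h1, max_eq_right hab, abs_of_nonneg (by linarith), abs_of_nonneg (by linarith)]
      linarith
    · rw [min_eq_right h', max_eq_right h]

lemma log_lip_aux {c x y : ℝ} (hc : 0 < c) (hx : c ≤ x) (hy : c ≤ y) (hxy : y ≤ x) :
    Real.log x - Real.log y ≤ (x - y) / c := by
  have hy0 : 0 < y := lt_of_lt_of_le hc hy
  have hx0 : 0 < x := lt_of_lt_of_le hc hx
  have h1 : Real.log x - Real.log y = Real.log (x / y) := (Real.log_div (by linarith) hy0.ne').symm
  rw [h1]
  calc Real.log (x / y) ≤ x / y - 1 := Real.log_le_sub_one_of_pos (by positivity)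
    _ = (x - y) / y := by field_simp
    _ ≤ (x - y) / c := div_le_div_of_nonneg_left (by linarith) hc hy

lemma log_lipschitz {c x y : ℝ} (hc : 0 < c) (hx : c ≤ x) (hy : c ≤ y) :
    |Real.log x - Real.log y| ≤ |x - y| / c := by
  rcases le_total y x with h | h
  · rw [abs_of_nonneg (by linarith [Real.log_le_log (lt_of_lt_of_le hc hy) h] :
      (0:ℝ) ≤ Real.log x - Real.log y), abs_of_nonneg (by linarith)]
    exact log_lip_aux hc hx hy h
  · rw [abs_sub_comm, abs_sub_comm x y, abs_of_nonneg (by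
      linarith [Real.log_le_log (lt_of_lt_of_le hc hx) h] : (0:ℝ) ≤ Real.log y - Real.log x),
      abs_of_nonneg (by linarith)]
    exact log_lip_aux hc hy hx h

lemma approx_lemma (μ ν : Measure ℂ) [IsFiniteMeasure μ] [IsFiniteMeasure ν]
    {a b : ℝ} (hb : b < 1) (hab : a ≤ b) (φ : ℂ → ℝ) (hφm : Measurable φ)
    (hφab : ∀ x, φ x ∈ Set.Icc a b) {ε : ℝ} (hε : 0 < ε) :
    ∃ g : C(ℂ, ℝ), (∀ z, g z < 1) ∧
      ∫ z, φ z ∂μ + ∫ z, Real.log (1 - φ z) ∂ν - ε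
        ≤ ∫ z, g z ∂μ + ∫ z, Real.log (1 - g z) ∂ν := by
  set ρ : Measure ℂ := μ + ν with hρ
  have hρreg : ρ.Regular := by infer_instance
  -- φ is bounded hence integrable w.r.t. ρ
  have hφbd : ∀ x, |φ x| ≤ max |a| |b| := by
    intro x
    obtain ⟨h1, h2⟩ := hφab x
    rw [abs_le]
    constructor
    · calc -(max |a| |b|) ≤ -|a| := by simp
        _ ≤ a := neg_abs_le a
        _ ≤ φ x := h1
    · exact le_trans h2 (le_trans (le_abs_self b) (le_max_right _ _))
  have hφρ : Integrable φ ρ := integrable_of_bound ρ φ _ hφm.aestronglyMeasurable hφbd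
  set L : ℝ := 1 / (1 - b) with hL
  have h1b : (0:ℝ) < 1 - b := by linarith
  have hLpos : 0 < L := by rw [hL]; exact div_pos one_pos h1b
  set ε' : ℝ := ε / (2 * (1 + L)) with hε'def
  have hε' : 0 < ε' := by rw [hε'def]; positivity
  obtain ⟨g₀, _, hg₀close, hg₀cont, hg₀int⟩ :=
    hφρ.exists_hasCompactSupport_integral_sub_le hε'
  -- the clamped function
  set G : C(ℂ, ℝ) := ⟨fun z => max a (min b (g₀ z)),
    continuous_const.max (continuous_const.min hg₀cont)⟩ with hGdef
  have hGab : ∀ z, G z ∈ Set.Icc a b := by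
    intro z
    exact ⟨le_max_left _ _, max_le hab (min_le_left _ _)⟩
  have hGlt : ∀ z, G z < 1 := fun z => lt_of_le_of_lt (hGab z).2 hb
  have hGdist : ∀ z, |G z - φ z| ≤ ‖φ z - g₀ z‖ := by
    intro z
    rw [Real.norm_eq_abs, abs_sub_comm (φ z) (g₀ z)]
    exact clamp_dist hab (hφab z)
  -- integrabilities
  have hφμ : Integrable φ μ := (integrable_add_measure.mp hφρ).1
  have hdρ : Integrable (fun z => ‖φ z - g₀ z‖) ρ := (hφρ.sub hg₀int).norm
  have hdμ : Integrable (fun z => ‖φ z - g₀ z‖) μ := (integrable_add_measure.mp hdρ).1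
  have hdν : Integrable (fun z => ‖φ z - g₀ z‖) ν := (integrable_add_measure.mp hdρ).2
  have hGμ : Integrable (fun z => G z) μ :=
    integrable_of_bound μ _ (max |a| |b|) G.continuous.aestronglyMeasurable
      (fun x => by
        obtain ⟨h1, h2⟩ := hGab x
        rw [abs_le]
        exact ⟨by calc -(max |a| |b|) ≤ -|a| := by simp
                  _ ≤ a := neg_abs_le a
                  _ ≤ G x := h1,
          le_trans h2 (le_trans (le_abs_self b) (le_max_right _ _))⟩)
  -- bound on integral wrt μ sub-measure of ρ
  have key_mono : ∀ (h : ℂ → ℝ), (∀ z, 0 ≤ h z) → Integrable h ρ →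
      ∫ z, h z ∂μ ≤ ∫ z, h z ∂ρ ∧ ∫ z, h z ∂ν ≤ ∫ z, h z ∂ρ := by
    intro h hpos hint
    have h1 := (integrable_add_measure.mp hint).1
    have h2 := (integrable_add_measure.mp hint).2
    rw [hρ, integral_add_measure h1 h2]
    constructor
    · nlinarith [integral_nonneg (μ := ν) (f := h) hpos]
    · nlinarith [integral_nonneg (μ := μ) (f := h) hpos]
  obtain ⟨hkeyμ, hkeyν⟩ := key_mono _ (fun z => norm_nonneg _) hdρ
  -- first estimate
  have est1 : |∫ z, G z ∂μ - ∫ z, φ z ∂μ| ≤ ε' := by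
    calc |∫ z, G z ∂μ - ∫ z, φ z ∂μ| ≤ ∫ z, |G z - φ z| ∂μ := int_abs_diff hGμ hφμ
      _ ≤ ∫ z, ‖φ z - g₀ z‖ ∂μ := by
          refine integral_mono ((hGμ.sub hφμ).abs) hdμ ?_
          intro z; exact hGdist z
      _ ≤ ∫ z, ‖φ z - g₀ z‖ ∂ρ := hkeyμ
      _ ≤ ε' := hg₀close
  -- log integrands, bounded
  set Cl : ℝ := max |Real.log (1 - b)| |Real.log (1 - a)| with hCl
  have hlogbd : ∀ y : ℝ, y ∈ Set.Icc a b → |Real.log (1 - y)| ≤ Cl := by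
    intro y ⟨h1, h2⟩
    have l1 : Real.log (1 - b) ≤ Real.log (1 - y) := Real.log_le_log (by linarith) (by linarith)
    have l2 : Real.log (1 - y) ≤ Real.log (1 - a) := Real.log_le_log (by linarith) (by linarith)
    rw [abs_le]
    constructor
    · calc -Cl ≤ -|Real.log (1 - b)| := by simp [hCl]
        _ ≤ Real.log (1 - b) := neg_abs_le _
        _ ≤ _ := l1
    · exact le_trans l2 (le_trans (le_abs_self _) (le_max_right _ _))
  have hlogφν : Integrable (fun z => Real.log (1 - φ z)) ν :=
    integrable_of_bound ν _ Cl
      ((Real.measurable_log.comp (measurable_const.sub hφm)).aestronglyMeasurable)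
      (fun x => hlogbd _ (hφab x))
  have hlogGν : Integrable (fun z => Real.log (1 - G z)) ν :=
    integrable_of_bound ν _ Cl
      ((continuous_const.sub G.continuous).log
        (fun z => by have := (hGab z).2; intro h; have h' : 1 - G z = 0 := h; nlinarith)).aestronglyMeasurable
      (fun x => hlogbd _ (hGab x))
  -- second estimate
  have est2 : |∫ z, Real.log (1 - G z) ∂ν - ∫ z, Real.log (1 - φ z) ∂ν| ≤ L * ε' := by
    calc |∫ z, Real.log (1 - G z) ∂ν - ∫ z, Real.log (1 - φ z) ∂ν|
        ≤ ∫ z, |Real.log (1 - G z) - Real.log (1 - φ z)| ∂ν := int_abs_diff hlogGν hlogφν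
      _ ≤ ∫ z, L * ‖φ z - g₀ z‖ ∂ν := by
          refine integral_mono ((hlogGν.sub hlogφν).abs) (hdν.const_mul L) ?_
          intro z
          have h1 : 1 - b ≤ 1 - G z := by linarith [(hGab z).2]
          have h2 : 1 - b ≤ 1 - φ z := by linarith [(hφab z).2]
          calc |Real.log (1 - G z) - Real.log (1 - φ z)|
              ≤ |(1 - G z) - (1 - φ z)| / (1 - b) :=
                log_lipschitz (by linarith) h1 h2
            _ = L * |G z - φ z| := by
                rw [show (1 - G z) - (1 - φ z) = -(G z - φ z) by ring, abs_neg, hL]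
                ring
            _ ≤ L * ‖φ z - g₀ z‖ := by
                exact mul_le_mul_of_nonneg_left (hGdist z) hLpos.le
      _ = L * ∫ z, ‖φ z - g₀ z‖ ∂ν := integral_const_mul L _
      _ ≤ L * ε' := mul_le_mul_of_nonneg_left (le_trans hkeyν hg₀close) hLpos.le
  refine ⟨G, hGlt, ?_⟩
  have habs1 := abs_le.mp est1
  have habs2 := abs_le.mp est2
  have h1L : (0:ℝ) < 1 + L := by linarith
  have heq : ε' + L * ε' = ε / 2 := by
    rw [hε'def]; field_simp
  linarith [habs1.1, habs2.1]

lemma sup_top_of_not_ac (μ ν : Measure ℂ) [IsProbabilityMeasure μ] [IsProbabilityMeasure ν]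
    (hnac : ¬ ν ≪ μ) (M : ℝ) :
    ∃ g : C(ℂ, ℝ), (∀ z, g z < 1) ∧
      M ≤ ∫ z, g z ∂μ + ∫ z, Real.log (1 - g z) ∂ν := by
  -- a measurable set with μ B = 0 < ν B
  have hex : ∃ B : Set ℂ, MeasurableSet B ∧ μ B = 0 ∧ ν B ≠ 0 := by
    by_contra h
    push_neg at h
    exact hnac (Measure.AbsolutelyContinuous.mk (fun s hs hμs => h s hs hμs))
  obtain ⟨B, hBm, hBμ, hBν⟩ := hex
  -- compact K ⊆ B with positive ν measure
  obtain ⟨K, hKB, hKc, hKν⟩ := hBm.exists_lt_isCompact (lt_of_le_of_ne (by positivity) (Ne.symm hBν))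
  have hKfin : ν K ≠ ⊤ := (measure_lt_top ν K).ne
  set c : ℝ := (ν K).toReal with hc
  have hcpos : 0 < c := ENNReal.toReal_pos (by simpa using hKν.ne') hKfin
  -- choose n
  obtain ⟨n, hn'⟩ := exists_nat_ge (max 1 (Real.exp ((M + 1) / c)))
  have hn : Real.exp ((M + 1) / c) ≤ n := le_trans (le_max_right _ _) hn'
  have hn1 : (1 : ℝ) ≤ n := le_trans (le_max_left _ _) hn'
  have hlogn : (M + 1) / c ≤ Real.log (1 + n) := by
    rw [← Real.log_exp ((M + 1) / c)]
    exact Real.log_le_log (Real.exp_pos _) (by linarith)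
  have hlogn' : M + 1 ≤ c * Real.log (1 + n) := by
    rw [div_le_iff₀ hcpos] at hlogn; linarith [hlogn]
  -- small open set around K
  have hKμ : μ K = 0 := le_antisymm (hBμ ▸ measure_mono hKB) (by positivity)
  obtain ⟨U, hKU, hUo, hUμ⟩ := Set.exists_isOpen_lt_of_lt K (ENNReal.ofReal (1 / (n + 1)))
    (by rw [hKμ]; exact ENNReal.ofReal_pos.mpr (by positivity))
  have hUμ' : (μ U).toReal < 1 / (n + 1) := by
    rw [← ENNReal.ofReal_toReal (measure_lt_top μ U).ne] at hUμ
    exact (ENNReal.ofReal_lt_ofReal_iff (by positivity)).mp hUμ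
  -- Urysohn
  obtain ⟨f, hfK, hfU, hfsupp, hf01⟩ := exists_continuous_one_zero_of_isCompact hKc
    hUo.isClosed_compl (Set.disjoint_left.mpr fun x hx hc => hc (hKU hx))
  refine ⟨(-(n : ℝ)) • f, ?_, ?_⟩
  · intro z
    have := (hf01 z).1
    simp only [ContinuousMap.smul_apply, smul_eq_mul]
    nlinarith
  · have hfint : Integrable (fun z => f z) μ := by
      refine Integrable.mono' (integrable_const 1) f.continuous.aestronglyMeasurable ?_
      filter_upwards with z
      rw [Real.norm_eq_abs, abs_le]; exact ⟨by linarith [(hf01 z).1], (hf01 z).2⟩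
    have hint1 : ∫ z, f z ∂μ ≤ (μ U).toReal := by
      have hind : Integrable (U.indicator (fun _ => (1:ℝ))) μ :=
        (integrable_const 1).indicator hUo.measurableSet
      have hmono : ∀ z, f z ≤ U.indicator (fun _ => (1:ℝ)) z := by
        intro z
        by_cases hz : z ∈ U
        · simp [Set.indicator_of_mem hz, (hf01 z).2]
        · simp [Set.indicator_of_notMem hz, hfU hz]
      calc ∫ z, f z ∂μ ≤ ∫ z, U.indicator (fun _ => (1:ℝ)) z ∂μ :=
            integral_mono hfint hind hmono
        _ = (μ U).toReal := by rw [integral_indicator_const _ hUo.measurableSet]; simp [Measure.real]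
    -- the log integral
    have hlogpos : ∀ z, (0:ℝ) ≤ Real.log (1 + n * f z) := fun z =>
      Real.log_nonneg (by nlinarith [(hf01 z).1])
    have hlogle : ∀ z, Real.log (1 + n * f z) ≤ Real.log (1 + n) := fun z =>
      Real.log_le_log (by nlinarith [(hf01 z).1]) (by nlinarith [(hf01 z).1, (hf01 z).2])
    have hlogcont : Continuous (fun z => Real.log (1 + n * f z)) :=
      (continuous_const.add (continuous_const.mul f.continuous)).log
        (fun z => ne_of_gt (by show (0:ℝ) < 1 + n * f z; nlinarith [(hf01 z).1]))
    have hlogint : Integrable (fun z => Real.log (1 + n * f z)) ν := by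
      refine Integrable.mono' (integrable_const (Real.log (1 + n)))
        hlogcont.aestronglyMeasurable ?_
      filter_upwards with z
      rw [Real.norm_eq_abs, abs_le]
      exact ⟨by linarith [hlogpos z, hlogle z], hlogle z⟩
    have hint2 : c * Real.log (1 + n) ≤ ∫ z, Real.log (1 + n * f z) ∂ν := by
      have hind : Integrable (K.indicator (fun _ => Real.log (1 + n))) ν :=
        (integrable_const _).indicator hKc.measurableSet
      have hmono : ∀ z, K.indicator (fun _ => Real.log (1 + n)) z ≤ Real.log (1 + n * f z) := by
        intro z
        by_cases hz : z ∈ K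
        · rw [Set.indicator_of_mem hz]
          have : f z = 1 := hfK hz
          rw [this]; norm_num
        · rw [Set.indicator_of_notMem hz]; exact hlogpos z
      calc c * Real.log (1 + n)
          = ∫ z, K.indicator (fun _ => Real.log (1 + n)) z ∂ν := by
            rw [integral_indicator_const _ hKc.measurableSet, smul_eq_mul, mul_comm]; simp [Measure.real, hc, mul_comm]
        _ ≤ _ := integral_mono hind hlogint hmono
    -- assemble
    have e1 : ∫ z, ((-(n : ℝ)) • f) z ∂μ = (-(n:ℝ)) * ∫ z, f z ∂μ := by
      simp only [ContinuousMap.smul_apply, smul_eq_mul]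
      rw [integral_const_mul]
    have e2 : ∫ z, Real.log (1 - ((-(n : ℝ)) • f) z) ∂ν = ∫ z, Real.log (1 + n * f z) ∂ν := by
      congr 1; ext z; simp only [ContinuousMap.smul_apply, smul_eq_mul]; ring_nf
    rw [e1, e2]
    have hb1 : (-(n:ℝ)) * ∫ z, f z ∂μ ≥ -1 := by
      have h0 : 0 ≤ ∫ z, f z ∂μ := integral_nonneg (fun z => (hf01 z).1)
      have : (n:ℝ) * ∫ z, f z ∂μ ≤ n * (1 / (n+1)) := by
        apply mul_le_mul_of_nonneg_left (le_trans hint1 hUμ'.le) (by positivity)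
      have hle1 : (n:ℝ) * (1/(n+1)) ≤ 1 := by
        rw [mul_one_div, div_le_one (by positivity)]; linarith
      nlinarith
    linarith [hint2, hb1, hlogn']

lemma nat_inv_le_one (n : ℕ) : ((n : ℝ))⁻¹ ≤ 1 := by
  rcases Nat.eq_zero_or_pos n with h | h
  · simp [h]
  · exact inv_le_one_of_one_le₀ (by exact_mod_cast h)

lemma psi_tendsto {f : ℂ → ℝ} {x : ℂ} (hx : 0 ≤ f x) :
    Tendsto (fun n : ℕ => max ((n : ℝ))⁻¹ (min (n : ℝ) (f x))) atTop (𝓝 (f x)) := by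
  rcases eq_or_lt_of_le hx with h0 | h0
  · have : ∀ n : ℕ, max ((n : ℝ))⁻¹ (min (n : ℝ) (f x)) = (n : ℝ)⁻¹ := by
      intro n
      rw [← h0, min_eq_right (by positivity), max_eq_left (by positivity)]
    rw [← h0]
    simpa [this] using tendsto_inv_atTop_nhds_zero_nat
  · have hev : ∀ᶠ n : ℕ in atTop, max ((n : ℝ))⁻¹ (min (n : ℝ) (f x)) = f x := by
      have h1 : ∀ᶠ n : ℕ in atTop, f x ≤ (n : ℝ) :=
        tendsto_natCast_atTop_atTop.eventually_ge_atTop (f x)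
      have h2 : ∀ᶠ n : ℕ in atTop, ((n : ℝ))⁻¹ < f x :=
        tendsto_inv_atTop_nhds_zero_nat.eventually_lt_const h0
      filter_upwards [h1, h2] with n hn1 hn2
      rw [min_eq_right hn1, max_eq_right hn2.le]
    exact Tendsto.congr' (hev.mono fun _ h => h.symm) tendsto_const_nhds

lemma trunc_tendsto (μ ν : Measure ℂ) [IsProbabilityMeasure μ] [IsProbabilityMeasure ν]
    (hac : ν ≪ μ) (hint : Integrable (llr ν μ) ν) :
    Tendsto (fun n : ℕ =>
        (∫ z, (1 - max ((n:ℝ))⁻¹ (min (n:ℝ) ((ν.rnDeriv μ z).toReal))) ∂μ)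
      + ∫ z, Real.log (max ((n:ℝ))⁻¹ (min (n:ℝ) ((ν.rnDeriv μ z).toReal))) ∂ν)
      atTop (𝓝 (∫ x, llr ν μ x ∂ν)) := by
  set f' : ℂ → ℝ := fun x => (ν.rnDeriv μ x).toReal with hf'def
  have hf'meas : Measurable f' := (Measure.measurable_rnDeriv ν μ).ennreal_toReal
  have hf'nonneg : ∀ x, 0 ≤ f' x := fun x => ENNReal.toReal_nonneg
  have hf'int : Integrable f' μ := Measure.integrable_toReal_rnDeriv
  set ψ : ℕ → ℂ → ℝ := fun n x => max ((n:ℝ))⁻¹ (min (n:ℝ) (f' x)) with hψdef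
  have hψmeas : ∀ n, Measurable (ψ n) :=
    fun n => measurable_const.max (measurable_const.min hf'meas)
  have hψnonneg : ∀ n x, 0 ≤ ψ n x := fun n x =>
    le_trans (by positivity) (le_max_left _ _)
  have hψle : ∀ n x, ψ n x ≤ f' x + 1 := by
    intro n x
    apply max_le
    · linarith [nat_inv_le_one n, hf'nonneg x]
    · calc min (n:ℝ) (f' x) ≤ f' x := min_le_right _ _
        _ ≤ f' x + 1 := by linarith
  have hψint : ∀ n, Integrable (ψ n) μ := by
    intro n
    refine Integrable.mono' (hf'int.add (integrable_const 1)) (hψmeas n).aestronglyMeasurable ?_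
    filter_upwards with x
    rw [Real.norm_eq_abs, abs_of_nonneg (hψnonneg n x)]
    exact hψle n x
  -- first convergence
  have h1 : Tendsto (fun n => ∫ z, ψ n z ∂μ) atTop (𝓝 1) := by
    have := tendsto_integral_of_dominated_convergence (μ := μ)
      (F := fun n z => ψ n z) (f := f') (bound := fun x => f' x + 1)
      (fun n => (hψmeas n).aestronglyMeasurable)
      (hf'int.add (integrable_const 1))
      (fun n => Filter.Eventually.of_forall fun x => by
        rw [Real.norm_eq_abs, abs_of_nonneg (hψnonneg n x)]; exact hψle n x)
      (Filter.Eventually.of_forall fun x => psi_tendsto (hf'nonneg x))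
    have heq : ∫ z, f' z ∂μ = 1 := by
      rw [hf'def, Measure.integral_toReal_rnDeriv hac]
      simp
    rwa [heq] at this
  -- a.e. positivity of f' w.r.t. ν
  have hpos : ∀ᵐ x ∂ν, 0 < f' x := by
    filter_upwards [Measure.rnDeriv_pos hac, hac.ae_le (Measure.rnDeriv_lt_top ν μ)]
      with x h1 h2
    exact ENNReal.toReal_pos h1.ne' h2.ne
  -- bound for log
  have hlogbound : ∀ n, ∀ x, 0 < f' x → |Real.log (ψ n x)| ≤ |Real.log (f' x)| := by
    intro n x hx
    rcases Nat.eq_zero_or_pos n with hn | hn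
    · subst hn
      have h0 : ψ 0 x = 0 := by
        simp only [hψdef, Nat.cast_zero, inv_zero]
        rw [min_eq_left (hf'nonneg x), max_self]
      rw [h0]
      simp
    · have hn1 : (1:ℝ) ≤ n := by exact_mod_cast hn
      have hninv : ((n:ℝ))⁻¹ ≤ (n:ℝ) := le_trans (nat_inv_le_one n) hn1
      have hninvpos : (0:ℝ) < ((n:ℝ))⁻¹ := by positivity
      rcases lt_or_ge (f' x) (((n:ℝ))⁻¹) with hA | hA
      · have hle : f' x ≤ (n:ℝ) := le_trans hA.le hninv
        have hψx : ψ n x = ((n:ℝ))⁻¹ := by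
          rw [hψdef]; simp only
          rw [min_eq_right hle, max_eq_left hA.le]
        rw [hψx]
        have l1 : Real.log (f' x) ≤ Real.log (((n:ℝ))⁻¹) := Real.log_le_log hx hA.le
        have l2 : Real.log (((n:ℝ))⁻¹) ≤ 0 := Real.log_nonpos (by positivity) (nat_inv_le_one n)
        rw [abs_of_nonpos l2, abs_of_nonpos (le_trans l1 l2)]
        linarith
      · rcases le_or_gt (f' x) (n:ℝ) with hB | hB
        · have hψx : ψ n x = f' x := by
            rw [hψdef]; simp only
            rw [min_eq_right hB, max_eq_right hA]
          rw [hψx]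
        · have hψx : ψ n x = (n:ℝ) := by
            rw [hψdef]; simp only
            rw [min_eq_left hB.le, max_eq_right hninv]
          rw [hψx]
          have l1 : (0:ℝ) ≤ Real.log n := Real.log_nonneg hn1
          have l2 : Real.log (n:ℝ) ≤ Real.log (f' x) := Real.log_le_log (by linarith) hB.le
          rw [abs_of_nonneg l1, abs_of_nonneg (le_trans l1 l2)]
          exact l2
  -- second convergence
  have h2 : Tendsto (fun n => ∫ z, Real.log (ψ n z) ∂ν) atTop (𝓝 (∫ x, llr ν μ x ∂ν)) := by
    refine tendsto_integral_of_dominated_convergence (bound := fun x => |llr ν μ x|)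
      (fun n => (Real.measurable_log.comp (hψmeas n)).aestronglyMeasurable)
      hint.abs ?_ ?_
    · intro n
      filter_upwards [hpos] with x hx
      rw [Real.norm_eq_abs]
      exact hlogbound n x hx
    · filter_upwards [hpos] with x hx
      have := (Real.continuousAt_log hx.ne').tendsto.comp (psi_tendsto (hf'nonneg x))
      exact this
  -- combine
  have hsub : ∀ n, ∫ z, (1 - ψ n z) ∂μ = 1 - ∫ z, ψ n z ∂μ := by
    intro n
    rw [integral_sub (integrable_const 1) (hψint n)]
    simp
  have := (tendsto_const_nhds (x := (1:ℝ)) (f := atTop (α := ℕ))).sub h1 |>.add h2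
  rw [sub_self, zero_add] at this
  refine Tendsto.congr (fun n => ?_) this
  show (1 - ∫ z, ψ n z ∂μ) + ∫ z, Real.log (ψ n z) ∂ν = _
  rw [← hsub n]

lemma nat_inv_le_one' (n : ℕ) : ((n : ℝ))⁻¹ ≤ 1 := by
  rcases Nat.eq_zero_or_pos n with h | h
  · simp [h]
  · exact inv_le_one_of_one_le₀ (by exact_mod_cast h)

lemma t_mul_minlog_bd {t : ℝ} (ht : 0 ≤ t) : |t * min 0 (Real.log t)| ≤ 1 := by
  rcases eq_or_lt_of_le ht with h0 | h0
  · simp [← h0]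
  · rcases le_or_gt 1 t with h1 | h1
    · rw [min_eq_left (Real.log_nonneg h1)]
      simp
    · have hlt : Real.log t ≤ 0 := Real.log_nonpos h0.le h1.le
      rw [min_eq_right hlt, abs_mul, abs_of_pos h0, abs_of_nonpos hlt]
      have hinv : Real.log t⁻¹ ≤ t⁻¹ - 1 := Real.log_le_sub_one_of_pos (by positivity)
      rw [Real.log_inv] at hinv
      have : t * -Real.log t ≤ t * (t⁻¹ - 1) :=
        mul_le_mul_of_nonneg_left hinv ht
      have ht' : t * (t⁻¹ - 1) = 1 - t := by field_simp
      nlinarith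

lemma lognat_mono : Monotone (fun n : ℕ => Real.log n) := by
  intro n m hnm
  rcases Nat.eq_zero_or_pos n with h | h
  · simp only [h, Nat.cast_zero, Real.log_zero]
    rcases Nat.eq_zero_or_pos m with h' | h'
    · simp [h']
    · exact Real.log_nonneg (by exact_mod_cast h')
  · exact Real.log_le_log (by exact_mod_cast h) (by exact_mod_cast hnm)

lemma lognat_nonneg (n : ℕ) : 0 ≤ Real.log n := by
  simpa using lognat_mono (Nat.zero_le n)

lemma trunc_unbounded (μ ν : Measure ℂ) [IsProbabilityMeasure μ] [IsProbabilityMeasure ν]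
    (hac : ν ≪ μ) (hnint : ¬ Integrable (llr ν μ) ν) (M : ℝ) :
    ∃ n : ℕ, 1 ≤ n ∧ M ≤
      (∫ z, (1 - max ((n:ℝ))⁻¹ (min (n:ℝ) ((ν.rnDeriv μ z).toReal))) ∂μ)
      + ∫ z, Real.log (max ((n:ℝ))⁻¹ (min (n:ℝ) ((ν.rnDeriv μ z).toReal))) ∂ν := by
  set f' : ℂ → ℝ := fun x => (ν.rnDeriv μ x).toReal with hf'def
  have hf'meas : Measurable f' := (Measure.measurable_rnDeriv ν μ).ennreal_toReal
  have hf'nonneg : ∀ x, 0 ≤ f' x := fun x => ENNReal.toReal_nonneg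
  have hf'int : Integrable f' μ := Measure.integrable_toReal_rnDeriv
  set ψ : ℕ → ℂ → ℝ := fun n x => max ((n:ℝ))⁻¹ (min (n:ℝ) (f' x)) with hψdef
  have hψmeas : ∀ n, Measurable (ψ n) :=
    fun n => measurable_const.max (measurable_const.min hf'meas)
  have hψnonneg : ∀ n x, 0 ≤ ψ n x := fun n x => le_trans (by positivity) (le_max_left _ _)
  have hψle : ∀ n x, ψ n x ≤ f' x + 1 := by
    intro n x
    apply max_le
    · linarith [nat_inv_le_one' n, hf'nonneg x]
    · calc min (n:ℝ) (f' x) ≤ f' x := min_le_right _ _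
        _ ≤ f' x + 1 := by linarith
  have hψint : ∀ n, Integrable (ψ n) μ := by
    intro n
    refine Integrable.mono' (hf'int.add (integrable_const 1)) (hψmeas n).aestronglyMeasurable ?_
    filter_upwards with x
    rw [Real.norm_eq_abs, abs_of_nonneg (hψnonneg n x)]
    exact hψle n x
  -- first term is ≥ -1
  have hfirst : ∀ n : ℕ, (-1 : ℝ) ≤ ∫ z, (1 - ψ n z) ∂μ := by
    intro n
    have h1 : ∫ z, (1 - ψ n z) ∂μ = 1 - ∫ z, ψ n z ∂μ := by
      rw [integral_sub (integrable_const 1) (hψint n)]; simp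
    have h2 : ∫ z, ψ n z ∂μ ≤ ∫ z, (f' z + 1) ∂μ :=
      integral_mono (hψint n) (hf'int.add (integrable_const 1)) (fun z => hψle n z)
    have h3 : ∫ z, (f' z + 1) ∂μ = 2 := by
      rw [integral_add hf'int (integrable_const 1), hf'def,
        Measure.integral_toReal_rnDeriv hac]
      norm_num
    linarith
  -- q := negative part of llr
  set q : ℂ → ℝ := fun x => min 0 (llr ν μ x) with hqdef
  have hqmeas : Measurable q := measurable_const.min (measurable_llr ν μ)
  have hqint : Integrable q ν := by
    rw [← integrable_rnDeriv_smul_iff hac]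
    refine Integrable.mono' (integrable_const 1)
      ((hf'meas.smul hqmeas).aestronglyMeasurable) ?_
    filter_upwards with x
    rw [smul_eq_mul, Real.norm_eq_abs]
    have := t_mul_minlog_bd (hf'nonneg x)
    simpa [hqdef, llr, hf'def] using this
  have hqnonpos : ∀ x, q x ≤ 0 := fun x => min_le_left _ _
  -- p := positive part
  set p : ℂ → ℝ := fun x => max 0 (llr ν μ x) with hpdef
  have hpmeas : Measurable p := measurable_const.max (measurable_llr ν μ)
  have hpnonneg : ∀ x, 0 ≤ p x := fun x => le_max_left _ _
  have hpq : ∀ x, p x + q x = llr ν μ x := by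
    intro x
    rcases le_total 0 (llr ν μ x) with h | h
    · rw [hpdef, hqdef]; simp only
      rw [max_eq_right h, min_eq_left h]; ring
    · rw [hpdef, hqdef]; simp only
      rw [max_eq_left h, min_eq_right h]; ring
  have hpnint : ¬ Integrable p ν := by
    intro hpint
    exact hnint (((hpint.add hqint)).congr (Filter.Eventually.of_forall hpq))
  -- the lintegral of p is ⊤
  have hptop : ∫⁻ x, ENNReal.ofReal (p x) ∂ν = ⊤ := by
    by_contra hfin
    refine hpnint ⟨hpmeas.aestronglyMeasurable, ?_⟩
    rw [hasFiniteIntegral_iff_ofReal (Filter.Eventually.of_forall hpnonneg)]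
    exact lt_top_iff_ne_top.mpr hfin
  -- Fn
  set F : ℕ → ℂ → ENNReal := fun n x => ENNReal.ofReal (min (Real.log n) (p x)) with hFdef
  have hFmeas : ∀ n, Measurable (F n) :=
    fun n => ENNReal.measurable_ofReal.comp (measurable_const.min hpmeas)
  have hFmono : Monotone F := by
    intro n m hnm x
    exact ENNReal.ofReal_le_ofReal (min_le_min (lognat_mono hnm) le_rfl)
  have hFsup : ∀ x, ⨆ n, F n x = ENNReal.ofReal (p x) := by
    intro x
    apply le_antisymm
    · exact iSup_le fun n => ENNReal.ofReal_le_ofReal (min_le_right _ _)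
    · obtain ⟨n, hn⟩ := exists_nat_ge (Real.exp (p x))
      have hlogn : p x ≤ Real.log n := by
        rw [← Real.log_exp (p x)]
        exact Real.log_le_log (Real.exp_pos _) hn
      have : F n x = ENNReal.ofReal (p x) := by
        rw [hFdef]; simp only
        rw [min_eq_right hlogn]
      exact this ▸ le_iSup (fun n => F n x) n
  have hFtop : ⨆ n, ∫⁻ x, F n x ∂ν = ⊤ := by
    rw [← lintegral_iSup hFmeas hFmono]
    rw [← hptop]
    exact lintegral_congr fun x => hFsup x
  have hFfin : ∀ n, ∫⁻ x, F n x ∂ν ≠ ⊤ := by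
    intro n
    have : ∫⁻ x, F n x ∂ν ≤ ∫⁻ _, ENNReal.ofReal (Real.log n) ∂ν :=
      lintegral_mono fun x => ENNReal.ofReal_le_ofReal (min_le_left _ _)
    rw [lintegral_const] at this
    exact (lt_of_le_of_lt this (by
      simp only [measure_univ, mul_one]
      exact ENNReal.ofReal_lt_top)).ne
  -- real version
  have hrint : ∀ n : ℕ, Integrable (fun x => min (Real.log n) (p x)) ν := by
    intro n
    refine Integrable.mono' (integrable_const (Real.log n))
      ((measurable_const.min hpmeas).aestronglyMeasurable) ?_
    filter_upwards with x
    rw [Real.norm_eq_abs, abs_of_nonneg (le_min (lognat_nonneg n) (hpnonneg x))]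
    exact min_le_left _ _
  have hreq : ∀ n : ℕ, ∫ x, min (Real.log n) (p x) ∂ν = (∫⁻ x, F n x ∂ν).toReal := by
    intro n
    rw [integral_eq_lintegral_of_nonneg_ae
      (Filter.Eventually.of_forall fun x => le_min (lognat_nonneg n) (hpnonneg x))
      ((measurable_const.min hpmeas).aestronglyMeasurable)]
  -- choose n
  set R : ℝ := max 0 (M + 1 - ∫ x, q x ∂ν) with hRdef
  have hRnn : 0 ≤ R := le_max_left _ _
  obtain ⟨n, hn⟩ : ∃ n, ENNReal.ofReal R < ∫⁻ x, F n x ∂ν := by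
    by_contra hcon
    push_neg at hcon
    have : ⨆ n, ∫⁻ x, F n x ∂ν ≤ ENNReal.ofReal R := iSup_le hcon
    rw [hFtop] at this
    exact (lt_irrefl ⊤ (lt_of_le_of_lt this ENNReal.ofReal_lt_top))
  have hn1 : 1 ≤ n := by
    by_contra hn0
    push_neg at hn0
    interval_cases n
    have hF0 : ∀ x, F 0 x = 0 := by
      intro x
      rw [hFdef]; simp only [Nat.cast_zero, Real.log_zero]
      rw [min_eq_left (hpnonneg x)]
      simp
    rw [lintegral_congr hF0] at hn
    simp at hn
  have hrn : R ≤ ∫ x, min (Real.log n) (p x) ∂ν := by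
    rw [hreq n]
    calc R = (ENNReal.ofReal R).toReal := by rw [ENNReal.toReal_ofReal hRnn]
      _ ≤ _ := (ENNReal.toReal_le_toReal (ENNReal.ofReal_ne_top) (hFfin n)).mpr hn.le
  -- lower bound for log ψ n
  have hpos : ∀ᵐ x ∂ν, 0 < f' x := by
    filter_upwards [Measure.rnDeriv_pos hac, hac.ae_le (Measure.rnDeriv_lt_top ν μ)]
      with x h1 h2
    exact ENNReal.toReal_pos h1.ne' h2.ne
  have hnR : (1:ℝ) ≤ (n:ℝ) := by exact_mod_cast hn1
  have hninv : ((n:ℝ))⁻¹ ≤ (n:ℝ) := le_trans (nat_inv_le_one' n) hnR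
  have hlogψbd : ∀ x, |Real.log (ψ n x)| ≤ Real.log n := by
    intro x
    have hlb : ((n:ℝ))⁻¹ ≤ ψ n x := le_max_left _ _
    have hub : ψ n x ≤ (n:ℝ) := max_le hninv (min_le_left _ _)
    have l1 : Real.log (((n:ℝ))⁻¹) ≤ Real.log (ψ n x) :=
      Real.log_le_log (by positivity) hlb
    have l2 : Real.log (ψ n x) ≤ Real.log n :=
      Real.log_le_log (lt_of_lt_of_le (by positivity) hlb) hub
    rw [Real.log_inv] at l1
    rw [abs_le]
    exact ⟨by linarith, l2⟩
  have hlogψint : Integrable (fun x => Real.log (ψ n x)) ν := by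
    refine Integrable.mono' (integrable_const (Real.log n))
      ((Real.measurable_log.comp (hψmeas n)).aestronglyMeasurable) ?_
    filter_upwards with x
    rw [Real.norm_eq_abs]
    exact hlogψbd x
  have hsecond : ∫ x, (min (Real.log n) (p x) + q x) ∂ν ≤ ∫ x, Real.log (ψ n x) ∂ν := by
    refine integral_mono_ae ((hrint n).add hqint) hlogψint ?_
    filter_upwards [hpos] with x hx
    have hllr : llr ν μ x = Real.log (f' x) := rfl
    rcases lt_or_ge (f' x) (((n:ℝ))⁻¹) with hA | hA
    · have hle : f' x ≤ (n:ℝ) := le_trans hA.le hninv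
      have hψx : ψ n x = ((n:ℝ))⁻¹ := by
        rw [hψdef]; simp only
        rw [min_eq_right hle, max_eq_left hA.le]
      have hlogf : Real.log (f' x) ≤ Real.log (((n:ℝ))⁻¹) := Real.log_le_log hx hA.le
      have hlogf0 : Real.log (f' x) ≤ 0 := by
        rw [Real.log_inv] at hlogf
        linarith [lognat_nonneg n]
      have hp0 : p x = 0 := by rw [hpdef]; simp only; rw [max_eq_left (hllr ▸ hlogf0)]
      have hq0 : q x = llr ν μ x := by
        rw [hqdef]; simp only; rw [min_eq_right (hllr ▸ hlogf0)]
      rw [hψx, hp0, hq0, hllr, Real.log_inv]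
      rw [min_eq_right (by linarith [lognat_nonneg n] : (0:ℝ) ≤ Real.log n)]
      rw [Real.log_inv] at hlogf
      linarith
    · rcases le_or_gt (f' x) (n:ℝ) with hB | hB
      · have hψx : ψ n x = f' x := by
          rw [hψdef]; simp only
          rw [min_eq_right hB, max_eq_right hA]
        rw [hψx, ← hllr, ← hpq x]
        have : min (Real.log n) (p x) ≤ p x := min_le_right _ _
        linarith
      · have hψx : ψ n x = (n:ℝ) := by
          rw [hψdef]; simp only
          rw [min_eq_left hB.le, max_eq_right hninv]
        have hlogf : Real.log (n:ℝ) ≤ Real.log (f' x) := Real.log_le_log (by linarith) hB.le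
        have hp : p x = llr ν μ x := by
          rw [hpdef]; simp only
          rw [max_eq_right (hllr ▸ (le_trans (lognat_nonneg n) hlogf))]
        have hq0 : q x = 0 := by
          rw [hqdef]; simp only
          rw [min_eq_left (hllr ▸ (le_trans (lognat_nonneg n) hlogf))]
        rw [hψx, hq0, hp, hllr]
        have : min (Real.log n) (Real.log (f' x)) ≤ Real.log n := min_le_left _ _
        linarith
  refine ⟨n, hn1, ?_⟩
  have hsplit : ∫ x, (min (Real.log n) (p x) + q x) ∂ν
      = ∫ x, min (Real.log n) (p x) ∂ν + ∫ x, q x ∂ν := integral_add (hrint n) hqint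
  have hRge : M + 1 - ∫ x, q x ∂ν ≤ R := le_max_right _ _
  have := hfirst n
  show M ≤ (∫ z, (1 - ψ n z) ∂μ) + ∫ z, Real.log (ψ n z) ∂ν
  linarith [hsecond, hrn, hsplit]

lemma key_ineq {t y : ℝ} (ht : 0 ≤ t) (hy : y < 1) :
    y + t * Real.log (1 - y) ≤ t * Real.log t - t + 1 := by
  rcases eq_or_lt_of_le ht with h0 | h0
  · simp [← h0]; linarith
  · have hu : 0 < (1 - y) / t := div_pos (by linarith) h0
    have := Real.log_le_sub_one_of_pos hu
    rw [Real.log_div (by linarith) (ne_of_gt h0)] at this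
    have h2 := mul_le_mul_of_nonneg_left this ht
    rw [mul_sub, mul_sub, mul_div_cancel₀ _ (ne_of_gt h0)] at h2
    linarith

lemma sphere_bounds (g : C(ℂ, ℝ)) (hg : ∀ z ∈ Metric.sphere (0 : ℂ) 1, g z < 1) :
    ∃ M δ : ℝ, 0 < δ ∧ ∀ z ∈ Metric.sphere (0 : ℂ) 1, |g z| ≤ M ∧ δ ≤ 1 - g z := by
  have hcpt : IsCompact (Metric.sphere (0 : ℂ) 1) := isCompact_sphere 0 1
  have hne : (Metric.sphere (0 : ℂ) 1).Nonempty := ⟨1, by simp⟩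
  obtain ⟨M, hM⟩ := hcpt.exists_bound_of_continuousOn g.continuous.continuousOn
  obtain ⟨z₀, hz₀, hmin⟩ := hcpt.exists_isMinOn hne
    ((continuous_const.sub g.continuous).continuousOn (s := Metric.sphere (0:ℂ) 1))
  exact ⟨M, 1 - g z₀, by linarith [hg z₀ hz₀], fun z hz => ⟨hM z hz, hmin hz⟩⟩

lemma easy_dir (μ : Measure ℂ) [IsProbabilityMeasure μ] (ν : Measure ℂ) [IsProbabilityMeasure ν]
    (hsupp : μ {z | ‖z‖ ≠ 1} = 0) (hνs : ν {z | ‖z‖ ≠ 1} = 0)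
    (hac : ν ≪ μ) (hint : Integrable (llr ν μ) ν)
    (g : C(ℂ, ℝ)) (hg : ∀ z ∈ Metric.sphere (0 : ℂ) 1, g z < 1) :
    ∫ z, g z ∂μ + ∫ z, Real.log (1 - g z) ∂ν ≤ ∫ x, llr ν μ x ∂ν := by
  obtain ⟨M, δ, hδ, hMδ⟩ := sphere_bounds g hg
  have hμae : ∀ᵐ z ∂μ, ‖z‖ = 1 := by
    rw [ae_iff]; exact hsupp
  have hνae : ∀ᵐ z ∂ν, ‖z‖ = 1 := by
    rw [ae_iff]; exact hνs
  set f' : ℂ → ℝ := fun x => (ν.rnDeriv μ x).toReal with hf'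
  have hf0 : ∀ x, 0 ≤ f' x := fun x => ENNReal.toReal_nonneg
  -- integrability of g wrt μ
  have hgint : Integrable (fun z => g z) μ := by
    refine Integrable.mono' (integrable_const M) g.continuous.aestronglyMeasurable ?_
    filter_upwards [hμae] with z hz
    exact (hMδ z (by simp [mem_sphere_zero_iff_norm, hz])).1
  -- integrability of log(1-g) wrt ν
  set C : ℝ := max |Real.log δ| |Real.log (1 + M)| with hC
  have hlogbound : ∀ z, ‖z‖ = 1 → ‖Real.log (1 - g z)‖ ≤ C := by
    intro z hz
    obtain ⟨h1, h2⟩ := hMδ z (by simp [mem_sphere_zero_iff_norm, hz])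
    have hub : 1 - g z ≤ 1 + M := by
      have := abs_le.mp h1; linarith [this.1]
    have l1 : Real.log δ ≤ Real.log (1 - g z) := Real.log_le_log hδ h2
    have l2 : Real.log (1 - g z) ≤ Real.log (1 + M) :=
      Real.log_le_log (by linarith) hub
    rw [Real.norm_eq_abs, abs_le]
    constructor
    · calc -C ≤ -|Real.log δ| := by simp [hC]
        _ ≤ Real.log δ := neg_abs_le _
        _ ≤ _ := l1
    · calc Real.log (1 - g z) ≤ Real.log (1 + M) := l2
        _ ≤ |Real.log (1 + M)| := le_abs_self _
        _ ≤ C := le_max_right _ _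
  have hlogint : Integrable (fun z => Real.log (1 - g z)) ν := by
    refine Integrable.mono' (integrable_const C)
      ((Real.measurable_log.comp (measurable_const.sub g.continuous.measurable)).aestronglyMeasurable) ?_
    filter_upwards [hνae] with z hz using hlogbound z hz
  -- change of measure
  rw [← integral_rnDeriv_smul hac (f := fun z => Real.log (1 - g z)),
      ← integral_rnDeriv_smul hac (f := llr ν μ)]
  have hint1 : Integrable (fun x => f' x • Real.log (1 - g x)) μ :=
    (integrable_rnDeriv_smul_iff hac).mpr hlogint
  have hint2 : Integrable (fun x => f' x • llr ν μ x) μ :=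
    (integrable_rnDeriv_smul_iff hac).mpr hint
  have hf'int : Integrable f' μ := Measure.integrable_toReal_rnDeriv
  have hsum : ∫ z, g z ∂μ + ∫ x, f' x • Real.log (1 - g x) ∂μ
      = ∫ x, (g x + f' x • Real.log (1 - g x)) ∂μ := (integral_add hgint hint1).symm
  rw [hsum]
  have h1 : Integrable (fun x => 1 - f' x) μ := (integrable_const (1:ℝ)).sub hf'int
  have hrhs : ∫ x, f' x • llr ν μ x ∂μ = ∫ x, (f' x • llr ν μ x + (1 - f' x)) ∂μ := by
    rw [integral_add hint2 h1, integral_sub (integrable_const 1) hf'int,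
      Measure.integral_toReal_rnDeriv hac]
    simp
  rw [hrhs]
  refine integral_mono_ae (hgint.add hint1) (hint2.add h1) ?_
  filter_upwards [hμae] with x hx
  have hgx : g x < 1 := hg x (by simp [mem_sphere_zero_iff_norm, hx])
  have := key_ineq (hf0 x) hgx
  simp only [smul_eq_mul, llr]
  calc g x + f' x * Real.log (1 - g x) ≤ f' x * Real.log (f' x) - f' x + 1 := this
    _ = f' x * Real.log (f' x) + (1 - f' x) := by ring

lemma ereal_le_of_forall_sub {K : ℝ} {S : EReal}
    (h : ∀ ε : ℝ, 0 < ε → ((K - ε : ℝ) : EReal) ≤ S) : (K : EReal) ≤ S := by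
  induction S using EReal.rec with
  | bot =>
    exfalso
    have := h 1 one_pos
    rw [le_bot_iff] at this
    exact EReal.coe_ne_bot _ this
  | coe s =>
    by_contra hc
    push_neg at hc
    rw [EReal.coe_lt_coe_iff] at hc
    have := h ((K - s) / 2) (by linarith)
    rw [EReal.coe_le_coe_iff] at this
    linarith
  | top => exact le_top

theorem duality_reversed_kullback
    (μ : Measure ℂ) [IsProbabilityMeasure μ]
    (hsupp : μ {z | ‖z‖ ≠ 1} = 0) :
    (⨆ g : {g : C(ℂ, ℝ) // ∀ z ∈ Metric.sphere (0 : ℂ) 1, g z < 1},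
        ((∫ z, g.1 z ∂μ + ∫ z, Real.log (1 - g.1 z) ∂lambdaT : ℝ) : EReal))
      = kullback lambdaT μ := by
  set S : EReal := (⨆ g : {g : C(ℂ, ℝ) // ∀ z ∈ Metric.sphere (0 : ℂ) 1, g z < 1},
        ((∫ z, g.1 z ∂μ + ∫ z, Real.log (1 - g.1 z) ∂lambdaT : ℝ) : EReal)) with hSdef
  by_cases h : lambdaT ≪ μ ∧ Integrable (llr lambdaT μ) lambdaT
  · obtain ⟨hac, hint⟩ := h
    rw [kullback, if_pos ⟨hac, hint⟩]
    apply le_antisymm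
    · refine iSup_le fun g => ?_
      rw [EReal.coe_le_coe_iff]
      exact easy_dir μ lambdaT hsupp lambdaT_sphere hac hint g.1 g.2
    · set K : ℝ := ∫ x, llr lambdaT μ x ∂lambdaT with hKdef
      refine ereal_le_of_forall_sub fun ε hε => ?_
      -- find a good n
      have htt := trunc_tendsto μ lambdaT hac hint
      have hev1 : ∀ᶠ n : ℕ in atTop,
          K - ε / 2 < (∫ z, (1 - max ((n:ℝ))⁻¹ (min (n:ℝ) ((lambdaT.rnDeriv μ z).toReal))) ∂μ)
            + ∫ z, Real.log (max ((n:ℝ))⁻¹ (min (n:ℝ) ((lambdaT.rnDeriv μ z).toReal))) ∂lambdaT :=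
        htt.eventually (eventually_gt_nhds (by linarith))
      obtain ⟨n, hn1, hnV⟩ := (((eventually_ge_atTop 1).and hev1)).exists
      obtain ⟨hn1, hnV⟩ := And.intro hn1 hnV
      have hnR : (1:ℝ) ≤ (n:ℝ) := by exact_mod_cast hn1
      have hninvpos : (0:ℝ) < ((n:ℝ))⁻¹ := by positivity
      have hninv : ((n:ℝ))⁻¹ ≤ (n:ℝ) := le_trans (nat_inv_le_one n) hnR
      -- apply the approximation lemma
      set φ : ℂ → ℝ := fun z => 1 - max ((n:ℝ))⁻¹ (min (n:ℝ) ((lambdaT.rnDeriv μ z).toReal))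
        with hφdef
      have hφm : Measurable φ := measurable_const.sub (measurable_const.max
        (measurable_const.min (Measure.measurable_rnDeriv lambdaT μ).ennreal_toReal))
      have hφab : ∀ x, φ x ∈ Set.Icc (1 - (n:ℝ)) (1 - ((n:ℝ))⁻¹) := by
        intro x
        have hm1 : ((n:ℝ))⁻¹ ≤ max ((n:ℝ))⁻¹ (min (n:ℝ) ((lambdaT.rnDeriv μ x).toReal)) :=
          le_max_left _ _
        have hm2 : max ((n:ℝ))⁻¹ (min (n:ℝ) ((lambdaT.rnDeriv μ x).toReal)) ≤ (n:ℝ) :=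
          max_le hninv (min_le_left _ _)
        constructor
        · simp only [hφdef]; linarith
        · simp only [hφdef]; linarith
      obtain ⟨g, hg1, hg2⟩ := approx_lemma μ lambdaT (a := 1 - (n:ℝ)) (b := 1 - ((n:ℝ))⁻¹)
        (by linarith) (by linarith) φ hφm hφab (half_pos hε)
      simp only [hφdef, sub_sub_cancel] at hg2
      have hval : K - ε ≤ ∫ z, g z ∂μ + ∫ z, Real.log (1 - g z) ∂lambdaT := by
        have := hg2
        linarith [hnV]
      calc ((K - ε : ℝ) : EReal)
          ≤ ((∫ z, g z ∂μ + ∫ z, Real.log (1 - g z) ∂lambdaT : ℝ) : EReal) :=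
            EReal.coe_le_coe_iff.mpr hval
        _ ≤ S := le_iSup (fun g : {g : C(ℂ, ℝ) // ∀ z ∈ Metric.sphere (0 : ℂ) 1, g z < 1} =>
              ((∫ z, g.1 z ∂μ + ∫ z, Real.log (1 - g.1 z) ∂lambdaT : ℝ) : EReal))
              ⟨g, fun z _ => hg1 z⟩
  · rw [kullback, if_neg h]
    -- S = ⊤
    have hM : ∀ M : ℝ, ∃ g : C(ℂ, ℝ), (∀ z, g z < 1) ∧
        M ≤ ∫ z, g z ∂μ + ∫ z, Real.log (1 - g z) ∂lambdaT := by
      intro M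
      by_cases hac : lambdaT ≪ μ
      · have hnint : ¬ Integrable (llr lambdaT μ) lambdaT := fun hi => h ⟨hac, hi⟩
        obtain ⟨n, hn1, hnV⟩ := trunc_unbounded μ lambdaT hac hnint (M + 1)
        have hnR : (1:ℝ) ≤ (n:ℝ) := by exact_mod_cast hn1
        have hninvpos : (0:ℝ) < ((n:ℝ))⁻¹ := by positivity
        have hninv : ((n:ℝ))⁻¹ ≤ (n:ℝ) := le_trans (nat_inv_le_one n) hnR
        set φ : ℂ → ℝ := fun z => 1 - max ((n:ℝ))⁻¹ (min (n:ℝ) ((lambdaT.rnDeriv μ z).toReal))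
          with hφdef
        have hφm : Measurable φ := measurable_const.sub (measurable_const.max
          (measurable_const.min (Measure.measurable_rnDeriv lambdaT μ).ennreal_toReal))
        have hφab : ∀ x, φ x ∈ Set.Icc (1 - (n:ℝ)) (1 - ((n:ℝ))⁻¹) := by
          intro x
          have hm1 : ((n:ℝ))⁻¹ ≤ max ((n:ℝ))⁻¹ (min (n:ℝ) ((lambdaT.rnDeriv μ x).toReal)) :=
            le_max_left _ _
          have hm2 : max ((n:ℝ))⁻¹ (min (n:ℝ) ((lambdaT.rnDeriv μ x).toReal)) ≤ (n:ℝ) :=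
            max_le hninv (min_le_left _ _)
          constructor
          · simp only [hφdef]; linarith
          · simp only [hφdef]; linarith
        obtain ⟨g, hg1, hg2⟩ := approx_lemma μ lambdaT (a := 1 - (n:ℝ)) (b := 1 - ((n:ℝ))⁻¹)
          (by linarith) (by linarith) φ hφm hφab (ε := 1) one_pos
        simp only [hφdef, sub_sub_cancel] at hg2
        exact ⟨g, hg1, by linarith [hnV]⟩
      · obtain ⟨g, hg1, hg2⟩ := sup_top_of_not_ac μ lambdaT hac M
        exact ⟨g, hg1, hg2⟩
    rw [EReal.eq_top_iff_forall_lt]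
    intro y
    obtain ⟨g, hg1, hg2⟩ := hM (y + 1)
    calc (y : EReal) < ((y + 1 : ℝ) : EReal) := EReal.coe_lt_coe_iff.mpr (by linarith)
      _ ≤ ((∫ z, g z ∂μ + ∫ z, Real.log (1 - g z) ∂lambdaT : ℝ) : EReal) :=
          EReal.coe_le_coe_iff.mpr hg2
      _ ≤ S := le_iSup (fun g : {g : C(ℂ, ℝ) // ∀ z ∈ Metric.sphere (0 : ℂ) 1, g z < 1} =>
            ((∫ z, g.1 z ∂μ + ∫ z, Real.log (1 - g.1 z) ∂lambdaT : ℝ) : EReal))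
            ⟨g, fun z _ => hg1 z⟩
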